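/- Fix a real constant c with 0 < c < 1/2. For d ≥ 1 let G = (ℤ/2ℤ)^d, n = 2^d, k = ⌊cn⌋, and let Pr_n(Diam > 2) be the probability, under the uniform distribution on k-element subsets S of G \ {1}, that some y ∈ G \ {1} satisfies y ∉ S and y ≠ s₁s₂ for all s₁, s₂ ∈ S. Then there exist constants β > 0 and N such that for all d with 2^d ≥ N one has Pr_n(Diam > 2) ≤ e^{−βn}; in particular, the diameter of a random Cayley digraph on an elementary abelian 2-group of order n and degree ⌊cn⌋ is asymptotically almost surely equal to two, with exponentially fast convergence. -/

import Mathlib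

open Finset

lemma sum_succ_real (m k : ℕ) : ∑ i ∈ range k, -(((i:ℝ)+1)/(2*(m:ℝ)+1)) = -(k*(k+1)) / (2*(2*(m:ℝ)+1)) := by
  induction k with
  | zero => simp
  | succ k ih => rw [Finset.sum_range_succ, ih]; push_cast; field_simp; ring

lemma descFac_bound (m k : ℕ) (hk : k ≤ m) :
    (2:ℝ)^k * (Nat.descFactorial m k) ≤
      (Nat.descFactorial (2*m+1) k) * Real.exp (-(k*(k+1))/(2*(2*m+1))) := by
  have hM : (0:ℝ) < 2*(m:ℝ)+1 := by positivity
  have hexp : Real.exp (-(k*(k+1) : ℝ)/(2*(2*m+1)))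
      = ∏ i ∈ range k, Real.exp (-(((i:ℝ)+1)/(2*m+1))) := by
    rw [← Real.exp_sum, sum_succ_real]
  rw [hexp, Nat.descFactorial_eq_prod_range, Nat.descFactorial_eq_prod_range]
  push_cast
  rw [← Finset.prod_mul_distrib, show (2:ℝ)^k = ∏ _i ∈ range k, (2:ℝ) by simp, ← Finset.prod_mul_distrib]
  apply Finset.prod_le_prod
  · intro i hi
    have hi' : i ≤ m := le_trans (le_of_lt (mem_range.mp hi)) hk
    positivity
  · intro i hi
    have hik : i < k := mem_range.mp hi
    have hi' : i ≤ m := le_trans (le_of_lt hik) hk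
    have h1 : ((m - i : ℕ) : ℝ) = (m:ℝ) - i := by
      push_cast [Nat.cast_sub hi']; ring
    have h2 : ((2*m + 1 - i : ℕ) : ℝ) = 2*(m:ℝ) + 1 - i := by
      have : i ≤ 2*m+1 := by omega
      push_cast [Nat.cast_sub this]; ring
    rw [h1, h2]
    set a : ℝ := 2*(m:ℝ)+1-i with ha
    have hap : (0:ℝ) < a := by
      have : (i:ℝ) ≤ m := by exact_mod_cast hi'
      simp only [ha]; linarith
    have hexp1 : 1 - ((i:ℝ)+1)/(2*(m:ℝ)+1) ≤ Real.exp (-(((i:ℝ)+1)/(2*(m:ℝ)+1))) := by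
      have := Real.add_one_le_exp (-(((i:ℝ)+1)/(2*(m:ℝ)+1)))
      linarith
    have key : a * (1 - ((i:ℝ)+1)/(2*(m:ℝ)+1)) ≥ 2*((m:ℝ) - i) := by
      have hfrac : a * (((i:ℝ)+1)/(2*(m:ℝ)+1)) ≤ (i:ℝ)+1 := by
        have : a ≤ 2*(m:ℝ)+1 := by
          have : (0:ℝ) ≤ i := Nat.cast_nonneg i
          simp only [ha]; linarith
        calc a * (((i:ℝ)+1)/(2*(m:ℝ)+1)) ≤ (2*(m:ℝ)+1) * (((i:ℝ)+1)/(2*(m:ℝ)+1)) := by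
              apply mul_le_mul_of_nonneg_right this
              positivity
          _ = (i:ℝ)+1 := by field_simp
      have : a * (1 - ((i:ℝ)+1)/(2*(m:ℝ)+1)) = a - a * (((i:ℝ)+1)/(2*(m:ℝ)+1)) := by ring
      rw [this]
      simp only [ha]
      linarith
    calc 2*((m:ℝ) - i) ≤ a * (1 - ((i:ℝ)+1)/(2*(m:ℝ)+1)) := key
      _ ≤ a * Real.exp (-(((i:ℝ)+1)/(2*(m:ℝ)+1))) := by
          apply mul_le_mul_of_nonneg_left hexp1 (le_of_lt hap)


lemma choose_bound' (m k : ℕ)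
    (descFac_bound : (2:ℝ)^k * (Nat.descFactorial m k) ≤
      (Nat.descFactorial (2*m+1) k) * Real.exp (-(k*(k+1))/(2*(2*m+1)))) :
    (2:ℝ)^k * (m.choose k) ≤ ((2*m+1).choose k) * Real.exp (-(k*(k+1))/(2*(2*m+1))) := by
  have hfac : (0:ℝ) < (k.factorial : ℝ) := by exact_mod_cast k.factorial_pos
  rw [Nat.descFactorial_eq_factorial_mul_choose, Nat.descFactorial_eq_factorial_mul_choose] at descFac_bound
  push_cast at descFac_bound
  rw [← mul_le_mul_iff_right₀ hfac]
  calc (k.factorial:ℝ) * ((2:ℝ)^k * (m.choose k)) = 2 ^ k * ((k.factorial:ℝ) * (m.choose k)) := by ring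
    _ ≤ (k.factorial:ℝ) * ((2*m+1).choose k) * Real.exp (-(k*(k+1))/(2*(2*m+1))) := descFac_bound
    _ = (k.factorial:ℝ) * (((2*m+1).choose k) * Real.exp (-(k*(k+1))/(2*(2*m+1)))) := by ring


abbrev Gp (d : ℕ) := Multiplicative (Fin d → ZMod 2)

variable {d : ℕ}

lemma sq_one (g : Gp d) : g * g = 1 := by
  have : Multiplicative.toAdd (g * g) = 0 := by
    rw [show Multiplicative.toAdd (g*g) = Multiplicative.toAdd g + Multiplicative.toAdd g from rfl]
    funext j
    have : ∀ x : ZMod 2, x + x = 0 := by decide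
    exact this _
  simpa using congrArg Multiplicative.ofAdd this

lemma zmod2_ne_zero (x : ZMod 2) (h : x ≠ 0) : x = 1 := by revert h; revert x; decide

set_option maxHeartbeats 1000000 in
lemma count_y (d k : ℕ) (hd : 1 ≤ d) (y : Gp d) (hy : y ≠ 1)
    (inst : DecidablePred (fun S : Finset (Gp d) => y ∉ S ∧ ∀ s₁ ∈ S, ∀ s₂ ∈ S, y ≠ s₁ * s₂)) :
    (@Finset.filter _ (fun S => y ∉ S ∧ ∀ s₁ ∈ S, ∀ s₂ ∈ S, y ≠ s₁ * s₂) inst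
      (((Finset.univ.erase (1 : Gp d)).powersetCard k))).card
    ≤ (Nat.choose (2^(d-1)-1) k) * 2^k := by
  classical
  -- find a coordinate where y is 1
  have hyne : Multiplicative.toAdd y ≠ 0 := by
    intro h; apply hy; simpa using congrArg Multiplicative.ofAdd h
  obtain ⟨i, hi⟩ := Function.ne_iff.mp hyne
  simp only [Pi.zero_apply] at hi
  set φ : Gp d → ZMod 2 := fun g => Multiplicative.toAdd g i with hφ
  have hφy : φ y = 1 := zmod2_ne_zero _ hi
  have hφmul : ∀ a b : Gp d, φ (a * b) = φ a + φ b := fun a b => rfl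
  have hφone : φ (1 : Gp d) = 0 := by simp [hφ]
  set R : Finset (Gp d) := (Finset.univ.filter (fun g => φ g = 0)).erase 1 with hR
  -- cardinality of R
  have hcard0 : (Finset.univ.filter (fun g : Gp d => φ g = 0)).card = 2^(d-1) := by
    have hbij : (Finset.univ.filter (fun g : Gp d => φ g = 0)).card
        = (Finset.univ.filter (fun g : Gp d => ¬ φ g = 0)).card := by
      apply Finset.card_bij' (fun g _ => g * y) (fun g _ => g * y)
      · intro a ha
        simp only [mem_filter, mem_univ, true_and] at ha ⊢
        rw [hφmul, ha, hφy]; decide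
      · intro a ha
        simp only [mem_filter, mem_univ, true_and] at ha ⊢
        rw [hφmul, zmod2_ne_zero _ ha, hφy]; decide
      · intro a _; rw [mul_assoc, sq_one, mul_one]
      · intro a _; rw [mul_assoc, sq_one, mul_one]
    have hsum := Finset.card_filter_add_card_filter_not
      (s := (Finset.univ : Finset (Gp d))) (fun g : Gp d => φ g = 0)
    have huniv : (Finset.univ : Finset (Gp d)).card = 2^d := by
      simp [Finset.card_univ]
    have h2d : 2^d = 2 * 2^(d-1) := by
      rw [← pow_succ']
      congr 1
      omega
    omega
  have h1mem : (1 : Gp d) ∈ Finset.univ.filter (fun g : Gp d => φ g = 0) := by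
    simp [hφone]
  have hRcard : R.card = 2^(d-1) - 1 := by
    rw [hR, Finset.card_erase_of_mem h1mem, hcard0]
  -- the encoding map
  set r : Gp d → Gp d := fun s => if φ s = 0 then s else s * y with hr
  set T := (Finset.powersetCard k R).sigma (fun A => A.powerset) with hT
  have hTcard : T.card = (Nat.choose (2^(d-1)-1) k) * 2^k := by
    rw [hT, Finset.card_sigma]
    rw [Finset.sum_congr rfl (fun A hA => ?_)]
    · rw [Finset.sum_const, Finset.card_powersetCard, hRcard, smul_eq_mul]
    · rw [Finset.card_powerset, (Finset.mem_powersetCard.mp hA).2]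
  rw [← hTcard]
  apply Finset.card_le_card_of_injOn (fun S => ⟨S.image r, S.image r \ S⟩)
  · -- maps to T
    intro S hS
    simp only [Finset.mem_coe, Finset.mem_filter, Finset.mem_powersetCard] at hS
    obtain ⟨⟨hSsub, hScard⟩, hyS, hprod⟩ := hS
    have hne1 : ∀ s ∈ S, s ≠ 1 := fun s hs => (Finset.mem_erase.mp (hSsub hs)).1
    have hrinj : Set.InjOn r S := by
      intro s hs t ht hst
      simp only [hr] at hst
      by_cases h1 : φ s = 0 <;> by_cases h2 : φ t = 0 <;> simp [h1, h2] at hst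
      · exact hst
      · exfalso
        apply hprod t ht s hs
        rw [hst, ← mul_assoc, sq_one, one_mul]
      · exfalso
        apply hprod s hs t ht
        rw [← hst, ← mul_assoc, sq_one, one_mul]
      · exact hst
    have hrR : ∀ s ∈ S, r s ∈ R := by
      intro s hs
      rw [hR, Finset.mem_erase]
      constructor
      · simp only [hr]
        by_cases h1 : φ s = 0
        · simpa [h1] using hne1 s hs
        · simp only [h1, if_false]
          intro hsy
          apply hyS
          have : s * (s * y) = s * 1 := by rw [hsy]
          rw [← mul_assoc, sq_one, one_mul, mul_one] at this
          rw [this]; exact hs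
      · simp only [Finset.mem_filter, Finset.mem_univ, true_and, hr]
        by_cases h1 : φ s = 0
        · simpa [h1]
        · simp only [h1, if_false]
          rw [hφmul, zmod2_ne_zero _ h1, hφy]; decide
    refine Finset.mem_sigma.mpr ⟨?_, ?_⟩
    · rw [Finset.mem_powersetCard]
      exact ⟨fun a ha => by obtain ⟨s, hs, rfl⟩ := Finset.mem_image.mp ha; exact hrR s hs,
        by rw [Finset.card_image_of_injOn hrinj, hScard]⟩
    · exact Finset.mem_powerset.mpr Finset.sdiff_subset
  · -- injective
    have hrecon : ∀ S ∈ @Finset.filter _ (fun S => y ∉ S ∧ ∀ s₁ ∈ S, ∀ s₂ ∈ S, y ≠ s₁ * s₂) inst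
        ((Finset.univ.erase (1 : Gp d)).powersetCard k),
        (S.image r \ (S.image r \ S)) ∪ ((S.image r \ S).image (· * y)) = S := by
      intro S hS
      simp only [Finset.mem_filter, Finset.mem_powersetCard] at hS
      obtain ⟨⟨hSsub, hScard⟩, hyS, hprod⟩ := hS
      ext g
      simp only [Finset.mem_union, Finset.mem_sdiff, Finset.mem_image]
      constructor
      · rintro (⟨hgA, hgB⟩ | ⟨b, ⟨hbA, hbS⟩, rfl⟩)
        · by_contra hgS; exact hgB ⟨hgA, hgS⟩
        · obtain ⟨s, hs, hrs⟩ := hbA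
          simp only [hr] at hrs
          by_cases h1 : φ s = 0
          · rw [if_pos h1] at hrs; exact absurd (hrs ▸ hs) hbS
          · rw [if_neg h1] at hrs
            rw [← hrs, mul_assoc, sq_one, mul_one]
            exact hs
      · intro hgS
        by_cases h1 : φ g = 0
        · left
          refine ⟨⟨g, hgS, by simp [hr, h1]⟩, ?_⟩
          rintro ⟨-, hgS'⟩; exact hgS' hgS
        · right
          refine ⟨g * y, ⟨⟨g, hgS, by simp [hr, h1]⟩, ?_⟩, by rw [mul_assoc, sq_one, mul_one]⟩
          intro hgyS
          exact hprod g hgS (g * y) hgyS (by rw [← mul_assoc, sq_one, one_mul])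
    intro S₁ hS₁ S₂ hS₂ heq
    simp only [Finset.coe_filter, Set.mem_setOf_eq] at hS₁ hS₂
    have h1 := hrecon S₁ (by simpa [Finset.mem_filter] using hS₁)
    have h2 := hrecon S₂ (by simpa [Finset.mem_filter] using hS₂)
    have hA : S₁.image r = S₂.image r := congrArg Sigma.fst heq
    have hB : S₁.image r \ S₁ = S₂.image r \ S₂ := by
      have := congrArg Sigma.snd heq
      simpa using this
    rw [← h1, hB, hA]; exact h2


lemma tail_bound (c : ℝ) (hc0 : 0 < c) :
    ∃ N : ℕ, ∀ n : ℕ, N ≤ n →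
      ((n:ℝ) - 1) * Real.exp (-((⌊c*(n:ℝ)⌋₊:ℝ)*((⌊c*(n:ℝ)⌋₊:ℝ)+1))/(2*((n:ℝ)-1)))
        ≤ Real.exp (-(c^2/8) * n) := by
  have hc2 : (0:ℝ) < c^2/8 := by positivity
  have hlog : ∀ᶠ x : ℝ in Filter.atTop, ‖Real.log x‖ ≤ c^2/8 * ‖x‖ :=
    Real.isLittleO_log_id_atTop.def hc2
  have hev : ∀ᶠ x : ℝ in Filter.atTop,
      (x - 1) * Real.exp (-((⌊c*x⌋₊:ℝ)*((⌊c*x⌋₊:ℝ)+1))/(2*(x-1)))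
        ≤ Real.exp (-(c^2/8) * x) := by
    filter_upwards [hlog, Filter.eventually_ge_atTop (2:ℝ),
      Filter.eventually_ge_atTop (4/c), Filter.eventually_ge_atTop (1/c)] with x h1 h2 h3 h4
    have hx0 : (0:ℝ) < x := by linarith
    have hx1 : (0:ℝ) < x - 1 := by linarith
    have hcx1 : 1 ≤ c * x := by
      rw [div_le_iff₀ hc0] at h4; linarith [h4]
    set K : ℝ := (⌊c*x⌋₊:ℝ) with hK
    have hKge : c*x - 1 ≤ K := by
      have := Nat.lt_floor_add_one (c*x)
      linarith
    have hK0 : (0:ℝ) ≤ c*x - 1 := by linarith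
    have hKK : (c*x-1)^2 ≤ K*(K+1) := by nlinarith
    have hE1 : (c*x-1)^2/(2*x) ≤ (c*x-1)^2/(2*(x-1)) := by
      apply div_le_div_of_nonneg_left (by positivity) (by linarith) (by linarith)
    have hE2 : c^2*x/2 - c ≤ (c*x-1)^2/(2*x) := by
      rw [le_div_iff₀ (by linarith)]
      nlinarith
    have hE : c^2*x/2 - c ≤ K*(K+1)/(2*(x-1)) := by
      calc c^2*x/2 - c ≤ (c*x-1)^2/(2*(x-1)) := le_trans hE2 hE1
        _ ≤ K*(K+1)/(2*(x-1)) :=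
            div_le_div_of_nonneg_right hKK (by linarith) -- ?
    -- main step
    have hElarge : c^2*x/8 + c^2*x/8 ≤ K*(K+1)/(2*(x-1)) := by
      have h3' : c ≤ c^2*x/4 := by
        rw [div_le_iff₀ hc0] at h3
        nlinarith
      linarith
    have hlogx : Real.log x ≤ c^2/8 * x := by
      rw [Real.norm_eq_abs, Real.norm_eq_abs] at h1
      have hlx : 0 ≤ Real.log x := Real.log_nonneg (by linarith)
      rw [abs_of_nonneg hlx, abs_of_pos hx0] at h1
      exact h1
    have hstep : x - 1 ≤ Real.exp (K*(K+1)/(2*(x-1)) - c^2/8*x) := by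
      calc x - 1 ≤ x := by linarith
        _ = Real.exp (Real.log x) := (Real.exp_log hx0).symm
        _ ≤ Real.exp (K*(K+1)/(2*(x-1)) - c^2/8*x) := by
            apply Real.exp_le_exp.mpr
            have : c^2*x/8 = c^2/8*x := by ring
            linarith [hElarge, hlogx, this]
    calc (x - 1) * Real.exp (-(K*(K+1))/(2*(x-1)))
        ≤ Real.exp (K*(K+1)/(2*(x-1)) - c^2/8*x) * Real.exp (-(K*(K+1))/(2*(x-1))) := by
          apply mul_le_mul_of_nonneg_right hstep (Real.exp_nonneg _)
      _ = Real.exp (-(c^2/8) * x) := by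
          rw [← Real.exp_add]; congr 1; ring
  have hevN : ∀ᶠ n : ℕ in Filter.atTop,
      ((n:ℝ) - 1) * Real.exp (-((⌊c*(n:ℝ)⌋₊:ℝ)*((⌊c*(n:ℝ)⌋₊:ℝ)+1))/(2*((n:ℝ)-1)))
        ≤ Real.exp (-(c^2/8) * n) := tendsto_natCast_atTop_atTop.eventually hev
  exact Filter.eventually_atTop.mp hevN

set_option maxHeartbeats 4000000 in
lemma main_est (c : ℝ) (hc0 : 0 < c) (hc1 : c < 1 / 2) (N : ℕ)
    (hNtail : ∀ n : ℕ, N ≤ n →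
      ((n:ℝ) - 1) * Real.exp (-((⌊c*(n:ℝ)⌋₊:ℝ)*((⌊c*(n:ℝ)⌋₊:ℝ)+1))/(2*((n:ℝ)-1)))
        ≤ Real.exp (-(c^2/8) * n))
    (d : ℕ) (hd : 1 ≤ d) (hN : N ≤ 2^d)
    {instF : DecidablePred (fun S : Finset (Gp d) => ∃ y ∈ Finset.univ.erase (1 : Gp d),
        y ∉ S ∧ ∀ s₁ ∈ S, ∀ s₂ ∈ S, y ≠ s₁ * s₂)} :
    ((@Finset.filter _ _ instF
        ((Finset.univ.erase (1 : Gp d)).powersetCard ⌊c * ((2^d : ℕ) : ℝ)⌋₊)).card : ℝ)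
      / (((Finset.univ.erase (1 : Gp d)).powersetCard ⌊c * ((2^d : ℕ) : ℝ)⌋₊).card : ℝ)
      ≤ Real.exp (-(c^2/8) * ((2^d : ℕ) : ℝ)) := by
  set n : ℕ := 2^d with hnval'
  have hnval : n = 2^d := rfl
  set k : ℕ := ⌊c * (n : ℝ)⌋₊ with hkdef
  have instP : ∀ y : Gp d, DecidablePred
      (fun S : Finset (Gp d) => y ∉ S ∧ ∀ s₁ ∈ S, ∀ s₂ ∈ S, y ≠ s₁ * s₂) :=
    fun y S => inferInstance
  have hcardG : Fintype.card (Gp d) = 2^d := by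
    simp [Fintype.card_fun]
  have hn1 : 1 ≤ n := Nat.one_le_two_pow
  set m : ℕ := 2^(d-1) - 1 with hm
  have h2d : 2^d = 2 * 2^(d-1) := by
    rw [← pow_succ']; congr 1; omega
  have hm1 : 1 ≤ 2^(d-1) := Nat.one_le_two_pow
  have h2m1 : 2*m + 1 = 2^d - 1 := by omega
  -- k ≤ m
  have hkm : k ≤ m := by
    have hkr : (k:ℝ) ≤ c * n := Nat.floor_le (by positivity)
    have hhalf : c * n < (2^(d-1) : ℕ) := by
      have hnr : (n:ℝ) = 2 * (2^(d-1):ℕ) := by exact_mod_cast congrArg (Nat.cast (R := ℝ)) (hnval.trans h2d)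
      have hpos : (0:ℝ) < ((2^(d-1):ℕ):ℝ) := by positivity
      calc c * n = c * 2 * ((2^(d-1):ℕ):ℝ) := by rw [hnr]; ring
        _ < 1 * ((2^(d-1):ℕ):ℝ) := by
            apply mul_lt_mul_of_pos_right _ hpos
            linarith
        _ = ((2^(d-1):ℕ):ℝ) := one_mul _
    have : (k:ℝ) < ((2^(d-1):ℕ):ℝ) := lt_of_le_of_lt hkr hhalf
    have hk' : k < 2^(d-1) := by exact_mod_cast this
    omega
  -- union bound
  set F := @Finset.filter _ _ instF
      ((Finset.univ.erase (1 : Gp d)).powersetCard k) with hF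
  have herasecard : (Finset.univ.erase (1 : Gp d)).card = 2^d - 1 := by
    rw [Finset.card_erase_of_mem (Finset.mem_univ _), Finset.card_univ, hcardG]
  have hunion : F.card ≤ (2^d - 1) * (Nat.choose m k * 2^k) := by
    have hsub : F ⊆ (Finset.univ.erase (1 : Gp d)).biUnion (fun y =>
        @Finset.filter _ (fun S => y ∉ S ∧ ∀ s₁ ∈ S, ∀ s₂ ∈ S, y ≠ s₁ * s₂) (instP y)
          ((Finset.univ.erase (1 : Gp d)).powersetCard k)) := by
      intro S hS
      rw [hF, Finset.mem_filter] at hS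
      obtain ⟨hS1, y, hy, hy2⟩ := hS
      exact Finset.mem_biUnion.mpr ⟨y, hy, Finset.mem_filter.mpr ⟨hS1, hy2⟩⟩
    calc F.card ≤ _ := Finset.card_le_card hsub
      _ ≤ ∑ y ∈ Finset.univ.erase (1 : Gp d),
          (@Finset.filter _ (fun S => y ∉ S ∧ ∀ s₁ ∈ S, ∀ s₂ ∈ S, y ≠ s₁ * s₂) (instP y)
            ((Finset.univ.erase (1 : Gp d)).powersetCard k)).card := Finset.card_biUnion_le
      _ ≤ ∑ _y ∈ Finset.univ.erase (1 : Gp d), (Nat.choose m k * 2^k) := by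
          apply Finset.sum_le_sum
          intro y hy
          exact count_y d k hd y (Finset.mem_erase.mp hy).1 (instP y)
      _ = (2^d - 1) * (Nat.choose m k * 2^k) := by
          rw [Finset.sum_const, herasecard, smul_eq_mul]
  -- denominator
  have hdenom : ((Finset.univ.erase (1 : Gp d)).powersetCard k).card = Nat.choose (2^d - 1) k := by
    rw [Finset.card_powersetCard, herasecard]
  rw [hdenom, ← h2m1]
  have hDposR : (0:ℝ) < ((Nat.choose (2*m+1) k : ℕ) : ℝ) := by
    exact_mod_cast Nat.choose_pos (by omega : k ≤ 2*m+1)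
  have hnm : n = 2*m+2 := by omega
  have e1 : 2*(m:ℝ)+1 = (n:ℝ)-1 := by rw [hnm]; push_cast; ring
  have hnpos : (0:ℝ) ≤ (n:ℝ)-1 := by rw [← e1]; positivity
  have h := choose_bound' m k (descFac_bound m k hkm)
  rw [div_le_iff₀ hDposR]
  have hstep1 : (F.card : ℝ) ≤ ((n:ℝ)-1) * ((2:ℝ)^k * (Nat.choose m k)) := by
    calc (F.card:ℝ) ≤ (((2^d - 1) * (Nat.choose m k * 2^k) : ℕ):ℝ) := by exact_mod_cast hunion
      _ = (((2*m+1) * (Nat.choose m k * 2^k) : ℕ):ℝ) := by rw [h2m1]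
      _ = (2*(m:ℝ)+1) * ((2:ℝ)^k * (Nat.choose m k)) := by push_cast; ring
      _ = ((n:ℝ)-1) * ((2:ℝ)^k * (Nat.choose m k)) := by rw [e1]
  have htail := hNtail n hN
  rw [← hkdef] at htail
  calc (F.card:ℝ) ≤ ((n:ℝ)-1) * ((2:ℝ)^k * (Nat.choose m k)) := hstep1
    _ ≤ ((n:ℝ)-1) * (((Nat.choose (2*m+1) k : ℕ):ℝ) * Real.exp (-((k:ℝ)*((k:ℝ)+1))/(2*(2*(m:ℝ)+1)))) :=
        mul_le_mul_of_nonneg_left h hnpos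
    _ = (((n:ℝ)-1) * Real.exp (-((k:ℝ)*((k:ℝ)+1))/(2*((n:ℝ)-1)))) * ((Nat.choose (2*m+1) k : ℕ):ℝ) := by
        rw [e1]; ring
    _ ≤ Real.exp (-(c^2/8) * (n:ℝ)) * ((Nat.choose (2*m+1) k : ℕ):ℝ) :=
        mul_le_mul_of_nonneg_right htail (le_of_lt hDposR)

set_option maxHeartbeats 1000000 in
theorem stmt_15 (c : ℝ) (hc0 : 0 < c) (hc1 : c < 1 / 2) :
    ∃ β : ℝ, 0 < β ∧ ∃ N : ℕ, ∀ d : ℕ, 1 ≤ d → N ≤ 2 ^ d →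
      (let G := Multiplicative (Fin d → ZMod 2)
       let n : ℕ := 2 ^ d
       let k : ℕ := ⌊c * n⌋₊
       ((((Finset.univ.erase (1 : G)).powersetCard k).filter
           (fun S => ∃ y ∈ Finset.univ.erase (1 : G),
             y ∉ S ∧ ∀ s₁ ∈ S, ∀ s₂ ∈ S, y ≠ s₁ * s₂)).card : ℝ)
         / (((Finset.univ.erase (1 : G)).powersetCard k).card : ℝ)
         ≤ Real.exp (-β * n)) := by
  obtain ⟨N, hNtail⟩ := tail_bound c hc0
  refine ⟨c^2/8, by positivity, N, ?_⟩
  intro d hd hN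
  exact main_est c hc0 hc1 N hNtail d hd hN
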